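/- Let V, V_* be ℂ-vector spaces with a nondegenerate pairing ⟨·,·⟩ : V × V_* → ℂ. Suppose {vᵢ}_{i∈ℕ} ⊆ V and {vⁱ}_{i∈ℕ} ⊆ V_* satisfy ⟨vᵢ, vʲ⟩ = δᵢⱼ, and suppose the dual system {ℂvᵢ, ℂvⁱ} is not maximal: there exist v₀ ∈ V, v⁰ ∈ V_* with ⟨vᵢ, vʲ⟩ = δᵢⱼ for all i, j ∈ ℕ ∪ {0}. Write V = X ⊕ span{vᵢ} and V_* = Y ⊕ span{vⁱ}, v₀ = x + Σⱼ aⱼvⱼ with x ∈ X, v⁰ = y + Σₖ bₖvᵏ with y ∈ Y (finite sums). Setting λᵢ(x') := ⟨x', vⁱ⟩ and μᵢ(y') := ⟨vᵢ, y'⟩ and ω := ⟨·,·⟩|_{X×Y}, then λᵢ(x) = −aᵢ, μᵢ(y) = −bᵢ (so x ∈ X₀, y ∈ Y₀), and ω̃(x,y) := ω(x,y) − Σₖ λₖ(x)μₖ(y) = 1. -/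
import Mathlib


/-- If a dual system `{ℂvᵢ, ℂvⁱ}` for `gl(V, V_*)` is not maximal, witnessed by an
extending pair `v₀, v⁰` decomposed along the complements `X, Y`, then the associated
complement datum is not maximal: `λᵢ(x) = −aᵢ`, `μᵢ(y) = −bᵢ` (so `x ∈ X₀`, `y ∈ Y₀`)
and `ω̃(x, y) = 1`. -/
theorem stmt16 (V Vs : Type*) [AddCommGroup V] [Module ℂ V] [AddCommGroup Vs] [Module ℂ Vs]
    (B : V →ₗ[ℂ] Vs →ₗ[ℂ] ℂ)
    (v : ℕ → V) (vs : ℕ → Vs)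
    (hdual : ∀ i j, B (v i) (vs j) = if i = j then 1 else 0)
    (X : Submodule ℂ V) (Y : Submodule ℂ Vs)
    (hX : IsCompl X (Submodule.span ℂ (Set.range v)))
    (hY : IsCompl Y (Submodule.span ℂ (Set.range vs)))
    (v0 : V) (v0s : Vs)
    (hext1 : ∀ i, B v0 (vs i) = 0) (hext2 : ∀ i, B (v i) v0s = 0)
    (hext3 : B v0 v0s = 1)
    (x : V) (hxX : x ∈ X) (a : ℕ → ℂ) (ha : (Function.support a).Finite)
    (hdecx : v0 = x + ∑ᶠ j, a j • v j)
    (y : Vs) (hyY : y ∈ Y) (b : ℕ → ℂ) (hb : (Function.support b).Finite)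
    (hdecy : v0s = y + ∑ᶠ k, b k • vs k) :
    (∀ i, B x (vs i) = -a i) ∧ (∀ i, B (v i) y = -b i) ∧
    {i : ℕ | B x (vs i) ≠ 0}.Finite ∧ {i : ℕ | B (v i) y ≠ 0}.Finite ∧
    B x y - ∑ᶠ k, B x (vs k) * B (v k) y = 1 := by
  have hsupx : (Function.support fun j => a j • v j).Finite :=
    ha.subset (fun j hj => by
      simp only [Function.mem_support] at hj ⊢
      exact fun h => hj (by simp [h]))
  have hsupy : (Function.support fun k => b k • vs k).Finite :=
    hb.subset (fun k hk => by
      simp only [Function.mem_support] at hk ⊢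
      exact fun h => hk (by simp [h]))
  have hx : x = v0 - ∑ᶠ j, a j • v j := by rw [hdecx]; abel
  have hy : y = v0s - ∑ᶠ k, b k • vs k := by rw [hdecy]; abel
  have hBs : ∀ w : Vs, B (∑ᶠ j, a j • v j) w = ∑ᶠ j, a j * B (v j) w := by
    intro w
    have h := (B.flip w).toAddMonoidHom.map_finsum hsupx
    simpa [LinearMap.flip_apply] using h
  have hBt : ∀ u : V, B u (∑ᶠ k, b k • vs k) = ∑ᶠ k, b k * B u (vs k) := by
    intro u
    have h := (B u).toAddMonoidHom.map_finsum hsupy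
    simpa using h
  have h1 : ∀ i, B x (vs i) = -a i := by
    intro i
    rw [hx, map_sub, LinearMap.sub_apply, hext1, hBs]
    have : (∑ᶠ j, a j * B (v j) (vs i)) = a i := by
      rw [finsum_eq_single _ i]
      · simp [hdual]
      · intro j hj
        simp [hdual, hj]
    rw [this]; ring
  have h2 : ∀ i, B (v i) y = -b i := by
    intro i
    rw [hy, map_sub, hext2, hBt]
    have : (∑ᶠ k, b k * B (v i) (vs k)) = b i := by
      rw [finsum_eq_single _ i]
      · simp [hdual]
      · intro k hk
        simp only [hdual, if_neg (Ne.symm hk), mul_zero]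
    rw [this]; ring
  refine ⟨h1, h2, ?_, ?_, ?_⟩
  · exact ha.subset (fun i hi => by
      simp only [Set.mem_setOf_eq, h1, ne_eq, neg_eq_zero] at hi
      exact hi)
  · exact hb.subset (fun i hi => by
      simp only [Set.mem_setOf_eq, h2, ne_eq, neg_eq_zero] at hi
      exact hi)
  · have hst : B (∑ᶠ j, a j • v j) (∑ᶠ k, b k • vs k) = ∑ᶠ j, a j * b j := by
      rw [hBs]
      refine finsum_congr fun j => ?_
      rw [hBt]
      congr 1
      rw [finsum_eq_single _ j]
      · simp [hdual]
      · intro k hk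
        simp only [hdual, if_neg (Ne.symm hk), mul_zero]
    have hBxy : B x y = 1 + ∑ᶠ j, a j * b j := by
      rw [hx, hy]
      simp only [map_sub, LinearMap.sub_apply]
      rw [hBt v0, hBs v0s, hst, hext3]
      simp [hext1, hext2]
    have hsum : (∑ᶠ k, B x (vs k) * B (v k) y) = ∑ᶠ j, a j * b j := by
      refine finsum_congr fun k => ?_
      rw [h1, h2]; ring
    rw [hBxy, hsum]; ring
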